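/- Fix an integer r ≥ 0 and real numbers A > 0 and α₀ > 0. Let (f_n)_{n≥1} be a sequence of monic polynomials in ℝ[X] such that every root of every f_n is real and lies in the interval [−A, A], and write d_n = deg f_n. Assume d_n → ∞ as n → ∞, that p_2(f_n) ≥ α₀²·d_n for all n, and that the multiset of roots of each f_n is invariant under negation (equivalently, f_n(−x) = (−1)^{d_n} f_n(x)). Then c_{2r+1}(f_n) = 0 for every n with d_n ≥ 2r+1, and there exists N such that for all n ≥ N one has (−1)^r · c_{2r}(f_n) > 0; that is, the coefficients eventually follow the sign pattern +, 0, −, 0, +, 0, −, 0, …. -/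
import Mathlib

open Polynomial Filter Asymptotics

namespace CoeffSignAux

lemma single_le_sum' {s : Multiset ℝ} (h : ∀ x ∈ s, 0 ≤ x) {a : ℝ} (ha : a ∈ s) :
    a ≤ s.sum := by
  rw [← Multiset.cons_erase ha, Multiset.sum_cons]
  have : 0 ≤ (s.erase a).sum := Multiset.sum_nonneg fun x hx => h x (Multiset.mem_of_mem_erase hx)
  linarith

lemma prod_pos' {s : Multiset ℝ} (h : ∀ x ∈ s, 0 < x) : 0 < s.prod := by
  induction s using Multiset.induction with
  | empty => simp
  | cons a s ih =>
    rw [Multiset.prod_cons]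
    exact mul_pos (h a (Multiset.mem_cons_self a s))
      (ih fun x hx => h x (Multiset.mem_cons_of_mem hx))

/-- positivity of elementary symmetric polynomials -/
lemma esymm_pos (s : Multiset ℝ) (h0 : ∀ x ∈ s, 0 ≤ x) (r : ℕ)
    (hr : r ≤ Multiset.card (s.filter (fun x => x ≠ 0))) : 0 < s.esymm r := by
  classical
  set m := s.filter (fun x => x ≠ 0) with hm
  -- choose a submultiset of m of card r
  obtain ⟨u, hu, hucard⟩ : ∃ u : Multiset ℝ, u ≤ m ∧ Multiset.card u = r := by
    refine ⟨(m.toList.take r : List ℝ), ?_, ?_⟩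
    · calc ((m.toList.take r : List ℝ) : Multiset ℝ) ≤ (m.toList : Multiset ℝ) :=
          Multiset.coe_le.2 (m.toList.take_sublist r).subperm
        _ = m := Multiset.coe_toList m
    · simp only [Multiset.coe_card, List.length_take]
      rw [Multiset.length_toList]
      omega
  have huS : u ∈ s.powersetCard r :=
    Multiset.mem_powersetCard.2 ⟨hu.trans (Multiset.filter_le _ s), hucard⟩
  have hupos : 0 < u.prod := by
    refine prod_pos' fun x hx => ?_
    have hxm : x ∈ m := Multiset.mem_of_le hu hx
    have := Multiset.of_mem_filter hxm
    have := h0 x (Multiset.mem_of_mem_filter hxm)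
    exact lt_of_le_of_ne ‹0 ≤ x› (Ne.symm ‹x ≠ 0›)
  have hmem : u.prod ∈ (s.powersetCard r).map Multiset.prod :=
    Multiset.mem_map_of_mem _ huS
  have hnn : ∀ y ∈ (s.powersetCard r).map Multiset.prod, (0:ℝ) ≤ y := by
    intro y hy
    obtain ⟨v, hv, rfl⟩ := Multiset.mem_map.1 hy
    exact Multiset.prod_nonneg fun x hx =>
      h0 x (Multiset.mem_of_le (Multiset.mem_powersetCard.1 hv).1 hx)
  exact lt_of_lt_of_le hupos (single_le_sum' hnn hmem)

/-- decomposition of a symmetric multiset -/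
lemma sym_decomp : ∀ (s : Multiset ℝ), s.map (fun x => -x) = s →
    ∃ t : Multiset ℝ, s = t + t.map (fun x => -x) ∨ s = 0 ::ₘ (t + t.map (fun x => -x)) := by
  intro s
  induction s using Multiset.strongInductionOn with
  | ih s ih =>
    intro h
    by_cases h0 : ∃ a ∈ s, a ≠ 0
    · obtain ⟨a, has, ha0⟩ := h0
      have hnas : -a ∈ s := by
        have := Multiset.mem_map_of_mem (fun x : ℝ => -x) has
        rwa [h] at this
      have hne : -a ≠ a := by
        intro hc; apply ha0; linarith [hc]
      have hnas' : -a ∈ s.erase a := (Multiset.mem_erase_of_ne hne).2 hnas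
      set s' := (s.erase a).erase (-a) with hs'def
      have hs : s = a ::ₘ (-a) ::ₘ s' := by
        rw [hs'def, Multiset.cons_erase hnas', Multiset.cons_erase has]
      have hsym' : s'.map (fun x => -x) = s' := by
        have hinj : Function.Injective (fun x : ℝ => -x) := fun x y => by simp
        rw [hs'def, Multiset.map_erase _ hinj, Multiset.map_erase _ hinj, h, neg_neg,
          Multiset.erase_comm]
      have hlt : s' < s := by
        calc s' ≤ s.erase a := Multiset.erase_le _ _
          _ < s := Multiset.erase_lt.2 has
      obtain ⟨t', ht'⟩ := ih s' hlt hsym'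
      refine ⟨a ::ₘ t', ?_⟩
      rcases ht' with ht' | ht'
      · left
        rw [hs, ht']
        simp only [Multiset.map_cons]
        rw [Multiset.cons_add, Multiset.add_cons]
      · right
        rw [hs, ht']
        simp only [Multiset.map_cons]
        rw [Multiset.cons_add, Multiset.add_cons]
        rw [Multiset.cons_swap (-a) 0, Multiset.cons_swap a 0]
    · push_neg at h0
      have hrep : s = Multiset.replicate (Multiset.card s) 0 :=
        Multiset.eq_replicate_card.2 h0
      rcases Nat.even_or_odd (Multiset.card s) with ⟨j, hj⟩ | ⟨j, hj⟩
      · refine ⟨Multiset.replicate j 0, Or.inl ?_⟩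
        rw [hrep, Multiset.map_replicate, neg_zero, ← Multiset.replicate_add, hj]
      · refine ⟨Multiset.replicate j 0, Or.inr ?_⟩
        rw [hrep, Multiset.map_replicate, neg_zero, ← Multiset.replicate_add, hj]
        rw [← Multiset.replicate_succ]
        congr 1
        omega

/-- product over symmetric pairs is an expand -/
lemma prod_pairs (t : Multiset ℝ) :
    ((t + t.map (fun x => -x)).map (fun a => X - C a)).prod =
      Polynomial.expand ℝ 2 (((t.map (fun a => a ^ 2)).map (fun a => X - C a)).prod) := by
  rw [Multiset.map_add, Multiset.prod_add, Multiset.map_map, Multiset.map_map]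
  have h1 : (t.map fun a => X - C a).prod * (t.map ((fun a => X - C a) ∘ fun x => -x)).prod
      = (t.map fun a => (X - C a) * (X + C a)).prod := by
    rw [Multiset.prod_map_mul]
    have : (Multiset.map ((fun a => X - C a) ∘ fun x : ℝ => -x) t) =
        Multiset.map (fun a => X + C a) t :=
      Multiset.map_congr rfl fun x _ => by simp [sub_neg_eq_add]
    rw [this]
  rw [h1]
  rw [map_multiset_prod, Multiset.map_map]
  apply congrArg
  apply Multiset.map_congr rfl
  intro x _
  simp only [Function.comp_apply, map_sub, Polynomial.expand_X, Polynomial.expand_C]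
  rw [Polynomial.C_pow]
  ring

/-- coefficient formula for a polynomial with symmetric roots -/
lemma key (p : Polynomial ℝ) (hm : p.Monic) (hcard : Multiset.card p.roots = p.natDegree)
    (t : Multiset ℝ)
    (hcase : p.roots = t + t.map (fun x => -x) ∨ p.roots = 0 ::ₘ (t + t.map (fun x => -x)))
    (r : ℕ) :
    (2 * r + 1 ≤ p.natDegree → p.coeff (p.natDegree - (2 * r + 1)) = 0) ∧
      (2 * r ≤ p.natDegree → (-1 : ℝ) ^ r * p.coeff (p.natDegree - 2 * r) =
        (t.map fun a => a ^ 2).esymm r) := by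
  have hf : (p.roots.map fun a => X - C a).prod = p :=
    prod_multiset_X_sub_C_of_monic_of_roots_card_eq hm hcard
  set m := Multiset.card t with hmdef
  set g := ((t.map fun a => a ^ 2).map fun a => X - C a).prod with hg
  have hcardsq : Multiset.card (t.map fun a => a ^ 2) = m := by rw [Multiset.card_map]
  rcases hcase with h | h
  · have hd : p.natDegree = 2 * m := by
      rw [← hcard, h, Multiset.card_add, Multiset.card_map]; omega
    have hp : p = Polynomial.expand ℝ 2 g := by rw [← hf, h, prod_pairs]
    constructor
    · intro hr
      rw [hd] at hr ⊢
      rw [hp, Polynomial.coeff_expand (by norm_num), if_neg (by omega)]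
    · intro hr
      rw [hd] at hr ⊢
      have hk : 2 * m - 2 * r = 2 * (m - r) := by omega
      rw [hp, hk, Polynomial.coeff_expand (by norm_num), if_pos ⟨m - r, rfl⟩,
        Nat.mul_div_cancel_left _ (by norm_num : 0 < 2)]
      have hle : m - r ≤ Multiset.card (t.map fun a => a ^ 2) := by omega
      rw [hg, Multiset.prod_X_sub_C_coeff _ hle, hcardsq,
        show m - (m - r) = r by omega, ← mul_assoc, ← mul_pow]
      norm_num
  · have hd : p.natDegree = 2 * m + 1 := by
      rw [← hcard, h, Multiset.card_cons, Multiset.card_add, Multiset.card_map]; omega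
    have hp : p = X * Polynomial.expand ℝ 2 g := by
      rw [← hf, h, Multiset.map_cons, Multiset.prod_cons, prod_pairs, C_0, sub_zero]
    constructor
    · intro hr
      rw [hd] at hr ⊢
      by_cases hrm : r = m
      · rw [hp, show 2 * m + 1 - (2 * r + 1) = 0 by omega, Polynomial.mul_coeff_zero,
          Polynomial.coeff_X_zero, zero_mul]
      · rw [hp, show 2 * m + 1 - (2 * r + 1) = (2 * (m - r) - 1) + 1 by omega,
          Polynomial.coeff_X_mul, Polynomial.coeff_expand (by norm_num), if_neg (by omega)]
    · intro hr
      rw [hd] at hr ⊢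
      rw [hp, show 2 * m + 1 - 2 * r = 2 * (m - r) + 1 by omega,
        Polynomial.coeff_X_mul, Polynomial.coeff_expand (by norm_num),
        if_pos ⟨m - r, rfl⟩, Nat.mul_div_cancel_left _ (by norm_num : 0 < 2)]
      have hle : m - r ≤ Multiset.card (t.map fun a => a ^ 2) := by omega
      rw [hg, Multiset.prod_X_sub_C_coeff _ hle, hcardsq,
        show m - (m - r) = r by omega, ← mul_assoc, ← mul_pow]
      norm_num

/-- half the nonzero elements of a symmetric multiset sit in `t` -/
lemma card_filter_half (t : Multiset ℝ) :
    Multiset.card (Multiset.filter (fun x => x ≠ 0) (t + t.map fun x => -x)) =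
      2 * Multiset.card (Multiset.filter (fun x => x ≠ 0) t) := by
  classical
  rw [Multiset.filter_add, Multiset.card_add, Multiset.filter_map, Multiset.card_map]
  have : Multiset.filter ((fun x : ℝ => x ≠ 0) ∘ fun x => -x) t
      = Multiset.filter (fun x => x ≠ 0) t := by
    apply Multiset.filter_congr
    intro x _
    simp
  rw [this]
  omega

lemma card_filter_sq (t : Multiset ℝ) :
    Multiset.card (Multiset.filter (fun x => x ≠ 0) (t.map fun a => a ^ 2)) =
      Multiset.card (Multiset.filter (fun x => x ≠ 0) t) := by
  classical
  rw [Multiset.filter_map, Multiset.card_map]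
  congr 1
  apply Multiset.filter_congr
  intro x _
  simp [pow_eq_zero_iff]

end CoeffSignAux

theorem coeff_sign_pattern_symmetric (r : ℕ) (A α₀ : ℝ) (hA : 0 < A) (hα : 0 < α₀)
    (f : ℕ → Polynomial ℝ)
    (hmonic : ∀ n, (f n).Monic)
    (hsplit : ∀ n, Multiset.card (f n).roots = (f n).natDegree)
    (hroots : ∀ n, ∀ x ∈ (f n).roots, x ∈ Set.Icc (-A) A)
    (hdeg : Tendsto (fun n => (f n).natDegree) atTop atTop)
    (hp2 : ∀ n, α₀ ^ 2 * ((f n).natDegree : ℝ) ≤ ((f n).roots.map (fun x => x ^ 2)).sum)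
    (hsym : ∀ n, (f n).roots.map (fun x => -x) = (f n).roots) :
    (∀ n, 2 * r + 1 ≤ (f n).natDegree →
        (f n).coeff ((f n).natDegree - (2 * r + 1)) = 0) ∧
      ∃ N : ℕ, ∀ n ≥ N, 0 < (-1 : ℝ) ^ r * (f n).coeff ((f n).natDegree - 2 * r) := by
  classical
  have hdec : ∀ n, ∃ t : Multiset ℝ, (f n).roots = t + t.map (fun x => -x) ∨
      (f n).roots = 0 ::ₘ (t + t.map (fun x => -x)) := fun n =>
    CoeffSignAux.sym_decomp _ (hsym n)
  constructor
  · intro n hn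
    obtain ⟨t, hcase⟩ := hdec n
    exact (CoeffSignAux.key (f n) (hmonic n) (hsplit n) t hcase r).1 hn
  · set M := max (2 * r + 1) ⌈2 * (r : ℝ) * A ^ 2 / α₀ ^ 2⌉₊ with hM
    obtain ⟨N, hN⟩ := Filter.eventually_atTop.1 (hdeg.eventually_ge_atTop M)
    refine ⟨N, fun n hn => ?_⟩
    obtain ⟨t, hcase⟩ := hdec n
    have hdM : M ≤ (f n).natDegree := hN n hn
    have hdr : 2 * r ≤ (f n).natDegree :=
      le_trans (le_trans (by omega) (le_max_left (2 * r + 1) _)) hdM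
    set F := Multiset.filter (fun x => x ≠ 0) (f n).roots with hF
    have hsum_le : (((f n).roots).map fun x => x ^ 2).sum ≤ (Multiset.card F : ℝ) * A ^ 2 := by
      have hsplit2 : (f n).roots = F + Multiset.filter (fun x => ¬ x ≠ 0) (f n).roots :=
        (Multiset.filter_add_not _ _).symm
      have hz : ((Multiset.filter (fun x => ¬ x ≠ 0) (f n).roots).map fun x => x ^ 2).sum = 0 := by
        apply Multiset.sum_eq_zero
        intro y hy
        obtain ⟨x, hx, rfl⟩ := Multiset.mem_map.1 hy
        have hx0 := Multiset.of_mem_filter hx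
        push_neg at hx0
        rw [hx0]
        ring
      calc (((f n).roots).map fun x => x ^ 2).sum
          = (F.map fun x => x ^ 2).sum +
            ((Multiset.filter (fun x => ¬ x ≠ 0) (f n).roots).map fun x => x ^ 2).sum := by
            conv_lhs => rw [hsplit2]
            rw [Multiset.map_add, Multiset.sum_add]
        _ = (F.map fun x => x ^ 2).sum := by rw [hz, add_zero]
        _ ≤ Multiset.card (F.map fun x => x ^ 2) • (A ^ 2) := by
            apply Multiset.sum_le_card_nsmul
            intro y hy
            obtain ⟨x, hx, rfl⟩ := Multiset.mem_map.1 hy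
            have hxI := hroots n x (Multiset.mem_of_mem_filter hx)
            exact sq_le_sq' hxI.1 hxI.2
        _ = (Multiset.card F : ℝ) * A ^ 2 := by rw [Multiset.card_map, nsmul_eq_mul]
    have h2r : 2 * r ≤ Multiset.card F := by
      have h1 : 2 * (r : ℝ) * A ^ 2 / α₀ ^ 2 ≤ ((f n).natDegree : ℝ) := by
        calc 2 * (r : ℝ) * A ^ 2 / α₀ ^ 2 ≤ (⌈2 * (r : ℝ) * A ^ 2 / α₀ ^ 2⌉₊ : ℝ) :=
            Nat.le_ceil _
          _ ≤ (M : ℝ) := Nat.cast_le.2 (le_max_right (2 * r + 1) _)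
          _ ≤ _ := by exact_mod_cast hdM
      have h2 : 2 * (r : ℝ) * A ^ 2 ≤ ((f n).natDegree : ℝ) * α₀ ^ 2 := by
        rw [div_le_iff₀ (by positivity)] at h1
        exact h1
      have h3 : α₀ ^ 2 * ((f n).natDegree : ℝ) ≤ (Multiset.card F : ℝ) * A ^ 2 :=
        le_trans (hp2 n) hsum_le
      have hA2 : (0 : ℝ) < A ^ 2 := by positivity
      have h4 : 2 * (r : ℝ) ≤ (Multiset.card F : ℝ) := by nlinarith
      exact_mod_cast h4
    have htcount : r ≤ Multiset.card (Multiset.filter (fun x => x ≠ 0) t) := by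
      rcases hcase with h | h
      · rw [hF, h, CoeffSignAux.card_filter_half] at h2r
        omega
      · rw [hF, h, Multiset.filter_cons_of_neg _ (by simp),
          CoeffSignAux.card_filter_half] at h2r
        omega
    have hpos : 0 < (t.map fun a => a ^ 2).esymm r := by
      apply CoeffSignAux.esymm_pos
      · intro x hx
        obtain ⟨y, _, rfl⟩ := Multiset.mem_map.1 hx
        positivity
      · rw [CoeffSignAux.card_filter_sq]
        exact htcount
    rw [(CoeffSignAux.key (f n) (hmonic n) (hsplit n) t hcase r).2 hdr]
    exact hpos
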